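/- Let T be a positively edge-weighted tree with leaf set X and square root embedding Ψ. Suppose X_1 | X_2 is a bipartition of X induced by deleting an edge e of T. Then for all x_1, x_2 ∈ X_1 and x_3, x_4 ∈ X_2, (Ψ(x_1) - Ψ(x_2)) · (Ψ(x_3) - Ψ(x_4)) = 0 and (Ψ(x_1) - Ψ(x_3)) · (Ψ(x_2) - Ψ(x_4)) ≥ w(e) > 0. -/

import Mathlib

open SimpleGraph

/-- The unique path between two vertices of a tree, as a walk. -/
noncomputable def treePath {V : Type*} (G : SimpleGraph V) (hG : G.IsTree) (a b : V) :
    G.Walk a b :=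
  (hG.existsUnique_path a b).choose

/-- The square root embedding with base node `v`: the coordinate of `Ψ_v u` at edge `e`
is `√(w e)` if `e` lies on the path from `v` to `u`, and `0` otherwise. -/
noncomputable def sqrtEmbed {V : Type*} [DecidableEq V] (G : SimpleGraph V) (hG : G.IsTree)
    [Fintype G.edgeSet] (w : Sym2 V → ℝ) (v u : V) : EuclideanSpace ℝ G.edgeSet :=
  WithLp.toLp 2 (fun e => if (e : Sym2 V) ∈ (treePath G hG v u).edges then Real.sqrt (w e) else 0)

/-- The tree metric: sum of the weights of the edges on the unique path. -/
noncomputable def treeDist {V : Type*} (G : SimpleGraph V) (hG : G.IsTree)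
    (w : Sym2 V → ℝ) (a b : V) : ℝ :=
  ((treePath G hG a b).edges.map w).sum

section Aux

variable {V : Type*} [DecidableEq V] {G : SimpleGraph V}

lemma treePath_isPath (hG : G.IsTree) (a b : V) : (treePath G hG a b).IsPath :=
  (hG.existsUnique_path a b).choose_spec.1

lemma treePath_eq (hG : G.IsTree) {a b : V} {p : G.Walk a b} (hp : p.IsPath) :
    treePath G hG a b = p := ((hG.existsUnique_path a b).choose_spec.2 p hp).symm

lemma mem_treePath_iff (hG : G.IsTree) (f : Sym2 V) (a b : V) :
    f ∈ (treePath G hG a b).edges ↔ ¬ (G.deleteEdges {f}).Reachable a b := by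
  constructor
  · rintro hf ⟨W⟩
    have hle : ∀ g ∈ (W.toPath : (G.deleteEdges {f}).Walk a b).edges, g ∈ G.edgeSet := by
      intro g hg
      have h2 := Walk.edges_subset_edgeSet _ hg
      rw [edgeSet_deleteEdges] at h2
      exact h2.1
    have hpath : ((W.toPath : (G.deleteEdges {f}).Walk a b).transfer G hle).IsPath :=
      (W.toPath).2.transfer hle
    have heq := treePath_eq hG hpath
    rw [heq, Walk.edges_transfer] at hf
    have h2 := Walk.edges_subset_edgeSet _ hf
    rw [edgeSet_deleteEdges] at h2
    exact h2.2 rfl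
  · intro h
    by_contra hf
    exact h ⟨(treePath G hG a b).toDeleteEdges {f}
      (fun g hg hgs => hf ((Set.mem_singleton_iff.mp hgs) ▸ hg))⟩

lemma support_reachable (hG : G.IsTree) {e : Sym2 V} {a b u : V}
    (hab : (G.deleteEdges {e}).Reachable a b) (hu : u ∈ (treePath G hG a b).support) :
    (G.deleteEdges {e}).Reachable a u := by
  have hne : e ∉ (treePath G hG a b).edges := by
    rw [mem_treePath_iff hG]; exact not_not.mpr hab
  exact ⟨((treePath G hG a b).toDeleteEdges {e}
    (fun g hg hgs => hne ((Set.mem_singleton_iff.mp hgs) ▸ hg))).takeUntil u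
    (by simpa only [Walk.support_transfer] using hu)⟩

lemma reachable_endpoints (hG : G.IsTree) {p q : V} (hpq : G.Adj p q) (u : V) :
    (G.deleteEdges {s(p,q)}).Reachable u p ∨ (G.deleteEdges {s(p,q)}).Reachable u q := by
  by_cases hf : s(p,q) ∈ (treePath G hG u p).edges
  · right
    set P := treePath G hG u p with hP
    have hq : q ∈ P.support := Walk.snd_mem_support_of_mem_edges _ hf
    have hPp := treePath_isPath hG u p
    refine ⟨(P.takeUntil q hq).toDeleteEdges {s(p,q)} ?_⟩
    intro g hg hgs
    rw [Set.mem_singleton_iff] at hgs; subst hgs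
    have hp' : p ∈ (P.takeUntil q hq).support := Walk.fst_mem_support_of_mem_edges _ hg
    have hnd := hPp.support_nodup
    rw [← hP, ← Walk.take_spec P hq, Walk.support_append] at hnd
    have hdisj := (List.nodup_append'.mp hnd).2.2
    have hptail : p ∈ (P.dropUntil q hq).support.tail := by
      have hpd : p ∈ (P.dropUntil q hq).support := Walk.end_mem_support _
      rw [Walk.support_eq_cons] at hpd
      rcases List.mem_cons.mp hpd with h | h
      · exact absurd h hpq.ne
      · exact h
    exact hdisj hp' hptail
  · exact Or.inl ⟨(treePath G hG u p).toDeleteEdges {s(p,q)}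
      (fun g hg hgs => hf ((Set.mem_singleton_iff.mp hgs) ▸ hg))⟩

lemma reachable_delete_iff (hG : G.IsTree) (f : Sym2 V) (v a b : V) :
    (G.deleteEdges {f}).Reachable a b ↔
      (f ∈ (treePath G hG v a).edges ↔ f ∈ (treePath G hG v b).edges) := by
  rw [mem_treePath_iff hG, mem_treePath_iff hG]
  constructor
  · intro h
    constructor
    · intro hva hvb; exact hva (hvb.trans h.symm)
    · intro hvb hva; exact hvb (hva.trans h)
  · intro h
    by_cases hva : (G.deleteEdges {f}).Reachable v a
    · have hvb : (G.deleteEdges {f}).Reachable v b := by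
        by_contra hvb
        exact (h.mpr (fun hva' => hvb hva')) hva
      exact hva.symm.trans hvb
    · have hvb : ¬ (G.deleteEdges {f}).Reachable v b := fun hvb => (h.mp hva) hvb
      -- both unreachable from v; use two-components fact, provided f is an edge
      by_cases hfE : f ∈ G.edgeSet
      · induction f with
        | _ p q =>
          have hpq : G.Adj p q := hfE
          rcases reachable_endpoints hG hpq v with hvp | hvq
          · have hap : ¬ (G.deleteEdges {s(p,q)}).Reachable a p :=
              fun h' => hva (hvp.trans h'.symm)
            have haq := (reachable_endpoints hG hpq a).resolve_left hap
            have hbp : ¬ (G.deleteEdges {s(p,q)}).Reachable b p :=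
              fun h' => hvb (hvp.trans h'.symm)
            have hbq := (reachable_endpoints hG hpq b).resolve_left hbp
            exact haq.trans hbq.symm
          · have haq : ¬ (G.deleteEdges {s(p,q)}).Reachable a q :=
              fun h' => hva (hvq.trans h'.symm)
            have hap := (reachable_endpoints hG hpq a).resolve_right haq
            have hbq : ¬ (G.deleteEdges {s(p,q)}).Reachable b q :=
              fun h' => hvb (hvq.trans h'.symm)
            have hbp := (reachable_endpoints hG hpq b).resolve_right hbq
            exact hap.trans hbp.symm
      · exfalso
        apply hva
        refine ⟨(treePath G hG v a).toDeleteEdges {f} (fun g hg hgs => hfE ?_)⟩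
        rw [Set.mem_singleton_iff] at hgs
        exact hgs ▸ Walk.edges_subset_edgeSet _ hg

lemma not_both (hG : G.IsTree) {e : Sym2 V} {x1 x2 x3 x4 : V}
    (h12 : (G.deleteEdges {e}).Reachable x1 x2) (h34 : (G.deleteEdges {e}).Reachable x3 x4)
    (h13 : ¬ (G.deleteEdges {e}).Reachable x1 x3) (f : Sym2 V)
    (hf1 : f ∈ (treePath G hG x1 x2).edges) (hf3 : f ∈ (treePath G hG x3 x4).edges) :
    False := by
  induction f with
  | _ p q =>
    have h1p := support_reachable hG h12 (Walk.fst_mem_support_of_mem_edges _ hf1)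
    have h3p := support_reachable hG h34 (Walk.fst_mem_support_of_mem_edges _ hf3)
    exact h13 (h1p.trans h3p.symm)

end Aux

open RealInnerProductSpace in
/-- if `X₁ | X₂` is the bipartition of the leaves of `T` induced by deleting
the edge `e`, then for leaves `x₁, x₂ ∈ X₁` and `x₃, x₄ ∈ X₂` the within-split difference
vectors are orthogonal, and the cross dot product is at least `w e > 0`. -/
theorem sqrtEmbed_split {V : Type*} [DecidableEq V] (G : SimpleGraph V) (hG : G.IsTree)
    [Fintype G.edgeSet] (w : Sym2 V → ℝ) (hw : ∀ e ∈ G.edgeSet, 0 < w e)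
    (v : V) (e : Sym2 V) (he : e ∈ G.edgeSet) (X₁ X₂ : Set V)
    (hleaves : X₁ ∪ X₂ = {u : V | ∃! u' : V, G.Adj u u'})
    (hdisj : Disjoint X₁ X₂)
    (hX₁ : ∀ a ∈ X₁, ∀ b ∈ X₁, (G.deleteEdges {e}).Reachable a b)
    (hX₂ : ∀ a ∈ X₂, ∀ b ∈ X₂, (G.deleteEdges {e}).Reachable a b)
    (hsep : ∀ a ∈ X₁, ∀ b ∈ X₂, ¬ (G.deleteEdges {e}).Reachable a b) :
    ∀ x₁ ∈ X₁, ∀ x₂ ∈ X₁, ∀ x₃ ∈ X₂, ∀ x₄ ∈ X₂,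
      ⟪sqrtEmbed G hG w v x₁ - sqrtEmbed G hG w v x₂,
        sqrtEmbed G hG w v x₃ - sqrtEmbed G hG w v x₄⟫ = 0 ∧
      w e ≤ ⟪sqrtEmbed G hG w v x₁ - sqrtEmbed G hG w v x₃,
              sqrtEmbed G hG w v x₂ - sqrtEmbed G hG w v x₄⟫ ∧
      0 < w e := by
  intro x₁ hx₁ x₂ hx₂ x₃ hx₃ x₄ hx₄
  have hde : 0 < w e := hw e he
  have h12 : (G.deleteEdges {e}).Reachable x₁ x₂ := hX₁ _ hx₁ _ hx₂
  have h34 : (G.deleteEdges {e}).Reachable x₃ x₄ := hX₂ _ hx₃ _ hx₄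
  have h13 : ¬ (G.deleteEdges {e}).Reachable x₁ x₃ := hsep _ hx₁ _ hx₃
  have inner_eq : ∀ a b c d : V,
      ⟪sqrtEmbed G hG w v a - sqrtEmbed G hG w v b,
        sqrtEmbed G hG w v c - sqrtEmbed G hG w v d⟫
      = ∑ f : G.edgeSet,
          ((if (f : Sym2 V) ∈ (treePath G hG v a).edges then Real.sqrt (w f) else 0)
            - (if (f : Sym2 V) ∈ (treePath G hG v b).edges then Real.sqrt (w f) else 0))
          * ((if (f : Sym2 V) ∈ (treePath G hG v c).edges then Real.sqrt (w f) else 0)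
            - (if (f : Sym2 V) ∈ (treePath G hG v d).edges then Real.sqrt (w f) else 0)) := by
    intro a b c d
    rw [PiLp.inner_apply]
    apply Finset.sum_congr rfl
    intro f _
    simp [sqrtEmbed, RCLike.inner_apply, mul_comm]
  refine ⟨?_, ?_, hde⟩
  · rw [inner_eq]
    apply Finset.sum_eq_zero
    rintro ⟨f, hfE⟩ -
    by_cases hb12 : (f ∈ (treePath G hG v x₁).edges ↔ f ∈ (treePath G hG v x₂).edges)
    · rw [if_congr hb12 rfl rfl, sub_self, zero_mul]
    by_cases hb34 : (f ∈ (treePath G hG v x₃).edges ↔ f ∈ (treePath G hG v x₄).edges)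
    · rw [if_congr hb34 rfl rfl, sub_self, mul_zero]
    exact absurd
      (not_both hG h12 h34 h13 f
        ((mem_treePath_iff hG f x₁ x₂).mpr
          (fun hr => hb12 ((reachable_delete_iff hG f v x₁ x₂).mp hr)))
        ((mem_treePath_iff hG f x₃ x₄).mpr
          (fun hr => hb34 ((reachable_delete_iff hG f v x₃ x₄).mp hr))))
      not_false
  · rw [inner_eq]
    have nonneg : ∀ f : G.edgeSet,
        0 ≤ ((if (f : Sym2 V) ∈ (treePath G hG v x₁).edges then Real.sqrt (w f) else 0)
            - (if (f : Sym2 V) ∈ (treePath G hG v x₃).edges then Real.sqrt (w f) else 0))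
          * ((if (f : Sym2 V) ∈ (treePath G hG v x₂).edges then Real.sqrt (w f) else 0)
            - (if (f : Sym2 V) ∈ (treePath G hG v x₄).edges then Real.sqrt (w f) else 0)) := by
      rintro ⟨f, hfE⟩
      by_cases hb13 : (f ∈ (treePath G hG v x₁).edges ↔ f ∈ (treePath G hG v x₃).edges)
      · rw [if_congr hb13 rfl rfl, sub_self, zero_mul]
      by_cases hb24 : (f ∈ (treePath G hG v x₂).edges ↔ f ∈ (treePath G hG v x₄).edges)
      · rw [if_congr hb24 rfl rfl, sub_self, mul_zero]
      have hb12 : (f ∈ (treePath G hG v x₁).edges ↔ f ∈ (treePath G hG v x₂).edges) := by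
        by_contra hn
        have hb34 : ¬ (f ∈ (treePath G hG v x₃).edges ↔ f ∈ (treePath G hG v x₄).edges) := by
          tauto
        exact not_both hG h12 h34 h13 f
          ((mem_treePath_iff hG f x₁ x₂).mpr
            (fun hr => hn ((reachable_delete_iff hG f v x₁ x₂).mp hr)))
          ((mem_treePath_iff hG f x₃ x₄).mpr
            (fun hr => hb34 ((reachable_delete_iff hG f v x₃ x₄).mp hr)))
      have hb34 : (f ∈ (treePath G hG v x₃).edges ↔ f ∈ (treePath G hG v x₄).edges) := by
        tauto
      rw [if_congr hb12.symm rfl rfl, if_congr hb34.symm rfl rfl]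
      exact mul_self_nonneg _
    have hval :
        ((if e ∈ (treePath G hG v x₁).edges then Real.sqrt (w e) else 0)
            - (if e ∈ (treePath G hG v x₃).edges then Real.sqrt (w e) else 0))
          * ((if e ∈ (treePath G hG v x₂).edges then Real.sqrt (w e) else 0)
            - (if e ∈ (treePath G hG v x₄).edges then Real.sqrt (w e) else 0)) = w e := by
      have hb12 : (e ∈ (treePath G hG v x₁).edges ↔ e ∈ (treePath G hG v x₂).edges) :=
        (reachable_delete_iff hG e v x₁ x₂).mp h12
      have hb34 : (e ∈ (treePath G hG v x₃).edges ↔ e ∈ (treePath G hG v x₄).edges) :=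
        (reachable_delete_iff hG e v x₃ x₄).mp h34
      have hb13 : ¬ (e ∈ (treePath G hG v x₁).edges ↔ e ∈ (treePath G hG v x₃).edges) :=
        fun h => h13 ((reachable_delete_iff hG e v x₁ x₃).mpr h)
      rw [if_congr hb12.symm rfl rfl, if_congr hb34.symm rfl rfl]
      by_cases hb1 : e ∈ (treePath G hG v x₁).edges
      · have hb3 : ¬ e ∈ (treePath G hG v x₃).edges :=
          fun h => hb13 ⟨fun _ => h, fun _ => hb1⟩
        rw [if_pos hb1, if_neg hb3, sub_zero]
        exact Real.mul_self_sqrt hde.le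
      · have hb3 : e ∈ (treePath G hG v x₃).edges := by tauto
        rw [if_neg hb1, if_pos hb3, zero_sub, neg_mul_neg]
        exact Real.mul_self_sqrt hde.le
    exact le_trans (le_of_eq hval.symm)
      (Finset.single_le_sum (fun f _ => nonneg f) (Finset.mem_univ (⟨e, he⟩ : G.edgeSet)))
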